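/- Let X and Y be real Hilbert spaces, let P_X : X → X and P_Y : Y → Y be orthogonal projections (bounded linear idempotent self-adjoint operators), let F : X → Y be a bijection whose inverse F^{−1} is Lipschitz with constant L', and let ν be a measure on Y such that the functions y ↦ ‖P_Y y − y‖² and y ↦ ‖P_X(F^{−1}(y)) − F^{−1}(y)‖² are ν-integrable. Then ∫_Y ‖P_X(F^{−1}(P_Y y)) − F^{−1}(y)‖² dν(y) ≤ 2·(L')²·∫_Y ‖P_Y y − y‖² dν(y) + 2·∫_Y ‖P_X(F^{−1}(y)) − F^{−1}(y)‖² dν(y). -/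

import Mathlib

open MeasureTheory
open scoped ENNReal NNReal

/-- An idempotent self-adjoint operator on a real Hilbert space is norm-nonincreasing. -/
lemma proj_norm_le {X : Type*} [NormedAddCommGroup X] [InnerProductSpace ℝ X]
    (PX : X →L[ℝ] X)
    (hPXidem : ∀ x : X, PX (PX x) = PX x)
    (hPXsa : ∀ x y : X, (inner ℝ (PX x) y : ℝ) = inner ℝ x (PX y)) (u : X) :
    ‖PX u‖ ≤ ‖u‖ := by
  have h1 : ‖PX u‖ ^ 2 = (inner ℝ u (PX u) : ℝ) := by
    have : (inner ℝ (PX u) (PX u) : ℝ) = inner ℝ u (PX u) := by rw [hPXsa, hPXidem]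
    rw [← this, real_inner_self_eq_norm_sq]
  have h2 : (inner ℝ u (PX u) : ℝ) ≤ ‖u‖ * ‖PX u‖ := real_inner_le_norm u (PX u)
  rcases eq_or_lt_of_le (norm_nonneg (PX u)) with h | h
  · rw [← h]; exact norm_nonneg u
  · have := h1 ▸ h2
    nlinarith

/-- Theorem 3.2 of the paper (inverse map, core estimate): for orthogonal projections
`P_X`, `P_Y` of real Hilbert spaces `X`, `Y` and a bijection `F : X → Y` whose inverse is
`L'`-Lipschitz,
`∫ ‖P_X(F^{−1}(P_Y y)) − F^{−1}(y)‖² dν ≤ 2(L')² ∫ ‖P_Y y − y‖² dν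
  + 2 ∫ ‖P_X(F^{−1} y) − F^{−1} y‖² dν`. -/
theorem pca_inverse_error {X Y : Type*}
    [NormedAddCommGroup X] [InnerProductSpace ℝ X] [CompleteSpace X]
    [NormedAddCommGroup Y] [InnerProductSpace ℝ Y] [CompleteSpace Y]
    [MeasurableSpace Y]
    (PX : X →L[ℝ] X) (PY : Y →L[ℝ] Y)
    (hPXidem : ∀ x : X, PX (PX x) = PX x)
    (hPXsa : ∀ x y : X, (inner ℝ (PX x) y : ℝ) = inner ℝ x (PX y))
    (hPYidem : ∀ y : Y, PY (PY y) = PY y)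
    (hPYsa : ∀ x y : Y, (inner ℝ (PY x) y : ℝ) = inner ℝ x (PY y))
    (F : X → Y) (Finv : Y → X)
    (hleft : Function.LeftInverse Finv F) (hright : Function.RightInverse Finv F)
    (L' : ℝ≥0) (hFinv : LipschitzWith L' Finv)
    (ν : Measure Y)
    (hint1 : Integrable (fun y : Y => ‖PY y - y‖ ^ 2) ν)
    (hint2 : Integrable (fun y : Y => ‖PX (Finv y) - Finv y‖ ^ 2) ν) :
    ∫ y, ‖PX (Finv (PY y)) - Finv y‖ ^ 2 ∂ν ≤
      2 * (L' : ℝ) ^ 2 * ∫ y, ‖PY y - y‖ ^ 2 ∂ν +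
      2 * ∫ y, ‖PX (Finv y) - Finv y‖ ^ 2 ∂ν := by
  set g : Y → ℝ := fun y =>
    2 * (L' : ℝ) ^ 2 * ‖PY y - y‖ ^ 2 + 2 * ‖PX (Finv y) - Finv y‖ ^ 2 with hg
  have hgi : Integrable g ν := ((hint1.const_mul _).add (hint2.const_mul 2))
  have hpt : ∀ y, ‖PX (Finv (PY y)) - Finv y‖ ^ 2 ≤ g y := by
    intro y
    have htri : ‖PX (Finv (PY y)) - Finv y‖ ≤
        ‖PX (Finv (PY y)) - PX (Finv y)‖ + ‖PX (Finv y) - Finv y‖ :=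
      norm_sub_le_norm_sub_add_norm_sub _ _ _
    have h1 : ‖PX (Finv (PY y)) - PX (Finv y)‖ ≤ (L' : ℝ) * ‖PY y - y‖ := by
      rw [← map_sub]
      calc ‖PX (Finv (PY y) - Finv y)‖ ≤ ‖Finv (PY y) - Finv y‖ :=
            proj_norm_le PX hPXidem hPXsa _
        _ ≤ (L' : ℝ) * ‖PY y - y‖ := by
            have := hFinv.dist_le_mul (PY y) y
            simpa [dist_eq_norm] using this
    have ha : (0:ℝ) ≤ ‖PX (Finv (PY y)) - Finv y‖ := norm_nonneg _
    have hb : (0:ℝ) ≤ (L' : ℝ) * ‖PY y - y‖ :=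
      mul_nonneg (NNReal.coe_nonneg L') (norm_nonneg _)
    have hgy : g y = 2 * (L' : ℝ) ^ 2 * ‖PY y - y‖ ^ 2
        + 2 * ‖PX (Finv y) - Finv y‖ ^ 2 := rfl
    rw [hgy]
    have hsq : ‖PX (Finv (PY y)) - PX (Finv y)‖ ^ 2 ≤ ((L' : ℝ) * ‖PY y - y‖) ^ 2 :=
      pow_le_pow_left₀ (norm_nonneg _) h1 2
    nlinarith [norm_nonneg (PX (Finv y) - Finv y),
      norm_nonneg (PX (Finv (PY y)) - PX (Finv y)),
      sq_nonneg (‖PX (Finv (PY y)) - PX (Finv y)‖ - ‖PX (Finv y) - Finv y‖),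
      mul_pow (L' : ℝ) ‖PY y - y‖ 2]
  calc ∫ y, ‖PX (Finv (PY y)) - Finv y‖ ^ 2 ∂ν ≤ ∫ y, g y ∂ν := by
        refine integral_mono_of_nonneg ?_ hgi ?_
        · exact Filter.Eventually.of_forall fun y => by positivity
        · exact Filter.Eventually.of_forall hpt
    _ = 2 * (L' : ℝ) ^ 2 * ∫ y, ‖PY y - y‖ ^ 2 ∂ν +
        2 * ∫ y, ‖PX (Finv y) - Finv y‖ ^ 2 ∂ν := by
        rw [hg, integral_add (hint1.const_mul _) (hint2.const_mul 2),
          integral_const_mul, integral_const_mul]
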